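/- Let y be an extreme point of the polytope P and let Y = {(e, v) ∈ E_all : y(e, v) > 0} be the set of coordinates where y is nonzero, with k = |Y|. Then there exist sets S_1 ⊊ S_2 ⊊ … ⊊ S_k in the lattice family L such that: (1) ∑_{(e,v)∈S_i} y(e, v) = f(S_i) for every i = 1, …, k; and (2) setting S_0 = ∅, for each i the set (S_i \ S_{i−1}) ∩ Y contains exactly one pair (e_i, v_i), and moreover every pair (e, w) ∈ S_i \ S_{i−1} satisfies e = e_i and w ≥ v_i. -/

import Mathlib

open Finset

/-- Membership of a pair in the ground set `E_all = {(e,v) : e ∈ E, v ∈ V e}`. -/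
def inGround {ε : Type*} (E : Finset ε) (V : ε → Finset ℝ) (q : ε × ℝ) : Prop :=
  q.1 ∈ E ∧ q.2 ∈ V q.1

/-- Membership in the lattice family `L`: subsets of `E_all` that are upward-closed
in the value coordinate. -/
def inLattice {ε : Type*} (E : Finset ε) (V : ε → Finset ℝ) (F : Finset (ε × ℝ)) : Prop :=
  (∀ q ∈ F, inGround E V q) ∧
    ∀ e v v', (e, v) ∈ F → v' ∈ V e → v ≤ v' → (e, v') ∈ F

/-- `f(F) = 1 - ∏_{e∈E}(1 - ∑_{v : (e,v)∈F} p (e,v))`. -/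
noncomputable def fPoI {ε : Type*} [DecidableEq ε] (E : Finset ε) (V : ε → Finset ℝ)
    (p : ε × ℝ → ℝ) (F : Finset (ε × ℝ)) : ℝ :=
  1 - ∏ e ∈ E, (1 - ∑ v ∈ (V e).filter fun v => (e, v) ∈ F, p (e, v))

/-- The polytope `P` of vectors `y ∈ ℝ^{E_all}` with `y ≥ 0` and
`∑_{(e,v)∈F} y (e,v) ≤ f F` for all `F ∈ L` (coordinates outside `E_all` are zero). -/
noncomputable def poiPolytope {ε : Type*} [DecidableEq ε] (E : Finset ε)
    (V : ε → Finset ℝ) (p : ε × ℝ → ℝ) : Set (ε × ℝ → ℝ) :=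
  {y | (∀ q, inGround E V q → 0 ≤ y q) ∧ (∀ q, ¬ inGround E V q → y q = 0) ∧
    ∀ F : Finset (ε × ℝ), inLattice E V F → ∑ q ∈ F, y q ≤ fPoI E V p F}

namespace PoI
variable {ε : Type*} [DecidableEq ε]

/-- the slice of `F` at edge `e` -/
noncomputable def slice (V : ε → Finset ℝ) (F : Finset (ε × ℝ)) (e : ε) : Finset ℝ :=
  (V e).filter fun v => (e, v) ∈ F

noncomputable def xe (V : ε → Finset ℝ) (p : ε × ℝ → ℝ) (F : Finset (ε × ℝ)) (e : ε) : ℝ :=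
  ∑ v ∈ slice V F e, p (e, v)

lemma fPoI_def (E : Finset ε) (V : ε → Finset ℝ) (p : ε × ℝ → ℝ) (F : Finset (ε × ℝ)) :
    fPoI E V p F = 1 - ∏ e ∈ E, (1 - xe V p F e) := rfl

section basic
variable {E : Finset ε} {V : ε → Finset ℝ} {p : ε × ℝ → ℝ}
variable (hp : ∀ e ∈ E, ∀ v ∈ V e, 0 < p (e, v)) (hsum : ∀ e ∈ E, ∑ v ∈ V e, p (e, v) < 1)

include hp in
lemma xe_nonneg {F : Finset (ε × ℝ)} {e : ε} (he : e ∈ E) : 0 ≤ xe V p F e := by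
  refine Finset.sum_nonneg fun v hv => ?_
  exact le_of_lt (hp e he v (mem_filter.1 hv).1)

include hp hsum in
lemma xe_lt_one {F : Finset (ε × ℝ)} {e : ε} (he : e ∈ E) : xe V p F e < 1 := by
  refine lt_of_le_of_lt ?_ (hsum e he)
  refine Finset.sum_le_sum_of_subset_of_nonneg (filter_subset _ _) fun v hv _ => ?_
  exact le_of_lt (hp e he v hv)

include hp hsum in
lemma factor_pos {F : Finset (ε × ℝ)} {e : ε} (he : e ∈ E) : 0 < 1 - xe V p F e := by
  have := xe_lt_one hp hsum (F := F) he; linarith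

include hp in
lemma xe_mono {F F' : Finset (ε × ℝ)} (h : F ⊆ F') {e : ε} (he : e ∈ E) :
    xe V p F e ≤ xe V p F' e := by
  refine Finset.sum_le_sum_of_subset_of_nonneg ?_ fun v hv _ => le_of_lt (hp e he v (mem_filter.1 hv).1)
  intro v hv
  rw [slice, mem_filter] at hv ⊢
  exact ⟨hv.1, h hv.2⟩

include hp hsum in
lemma fPoI_mono {F F' : Finset (ε × ℝ)} (h : F ⊆ F') : fPoI E V p F ≤ fPoI E V p F' := by
  rw [fPoI_def, fPoI_def]
  have : ∏ e ∈ E, (1 - xe V p F' e) ≤ ∏ e ∈ E, (1 - xe V p F e) := by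
    refine Finset.prod_le_prod (fun e he => le_of_lt (factor_pos hp hsum he)) fun e he => ?_
    have := xe_mono hp h (p := p) he; linarith
  linarith

include hp hsum in
lemma fPoI_strict_mono {F F' : Finset (ε × ℝ)} (h : F ⊆ F') {q : ε × ℝ}
    (hq : q ∈ F') (hqF : q ∉ F) (hqe : q.1 ∈ E) (hqv : q.2 ∈ V q.1) :
    fPoI E V p F < fPoI E V p F' := by
  rw [fPoI_def, fPoI_def]
  have : ∏ e ∈ E, (1 - xe V p F' e) < ∏ e ∈ E, (1 - xe V p F e) := by
    refine Finset.prod_lt_prod (fun e he => factor_pos hp hsum he)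
      (fun e he => by have := xe_mono hp h (p := p) he; linarith) ?_
    refine ⟨q.1, hqe, ?_⟩
    have hx : xe V p F q.1 + p q < xe V p F' q.1 + p q := by
      have hsub : insert q.2 (slice V F q.1) ⊆ slice V F' q.1 := by
        intro v hv
        rcases Finset.mem_insert.1 hv with rfl | hv
        · exact mem_filter.2 ⟨hqv, hq⟩
        · rw [slice, mem_filter] at hv ⊢; exact ⟨hv.1, h hv.2⟩
      have hnm : q.2 ∉ slice V F q.1 := fun hc => hqF (mem_filter.1 hc).2
      have : xe V p F q.1 + p q ≤ xe V p F' q.1 := by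
        have := Finset.sum_le_sum_of_subset_of_nonneg hsub
          (fun v hv _ => le_of_lt (hp q.1 hqe v (mem_filter.1 hv).1))
        rw [Finset.sum_insert hnm] at this
        calc xe V p F q.1 + p q = p (q.1, q.2) + xe V p F q.1 := by rw [add_comm]
          _ ≤ xe V p F' q.1 := this
      have hpq : 0 < p q := by have := hp q.1 hqe q.2 hqv; simpa using this
      linarith
    linarith
  linarith

lemma fPoI_empty (E : Finset ε) (V : ε → Finset ℝ) (p : ε × ℝ → ℝ) :
    fPoI E V p (∅ : Finset (ε × ℝ)) = 0 := by
  simp [fPoI]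

lemma slice_nested {F G : Finset (ε × ℝ)} (hF : inLattice E V F) (hG : inLattice E V G)
    (e : ε) : slice V F e ⊆ slice V G e ∨ slice V G e ⊆ slice V F e := by
  by_contra hc
  push_neg at hc
  obtain ⟨⟨v, hvF, hvG⟩, ⟨w, hwG, hwF⟩⟩ : (∃ v ∈ slice V F e, v ∉ slice V G e) ∧
      (∃ w ∈ slice V G e, w ∉ slice V F e) := by
    constructor
    · rcases Finset.not_subset.1 hc.1 with ⟨v, hv1, hv2⟩; exact ⟨v, hv1, hv2⟩
    · rcases Finset.not_subset.1 hc.2 with ⟨w, hw1, hw2⟩; exact ⟨w, hw1, hw2⟩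
  rw [slice, mem_filter] at hvF hwG
  rcases le_total v w with hle | hle
  · exact hwF (mem_filter.2 ⟨hwG.1, hF.2 e v w hvF.2 hwG.1 hle⟩)
  · exact hvG (mem_filter.2 ⟨hvF.1, hG.2 e w v hwG.2 hvF.1 hle⟩)

lemma slice_union (V : ε → Finset ℝ) (F G : Finset (ε × ℝ)) (e : ε) :
    slice V (F ∪ G) e = slice V F e ∪ slice V G e := by
  ext v; simp [slice, mem_filter, mem_union]; tauto

lemma slice_inter (V : ε → Finset ℝ) (F G : Finset (ε × ℝ)) (e : ε) :
    slice V (F ∩ G) e = slice V F e ∩ slice V G e := by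
  ext v; simp [slice, mem_filter, mem_inter]; tauto

end basic

lemma key_step (a b A B m M : ℝ) (ha : 0 ≤ a) (hb : 0 ≤ b) (hab : a ≤ b)
    (hA : 0 ≤ A) (hB : 0 ≤ B) (hm : 0 ≤ m)
    (h1 : A ≤ M) (h2 : B ≤ M) (h3 : m ≤ A) (h4 : m ≤ B) (h5 : A + B ≤ m + M) :
    a*A ≤ b*M ∧ b*B ≤ b*M ∧ a*m ≤ a*A ∧ a*m ≤ b*B ∧ a*A + b*B ≤ a*m + b*M := by
  have hb' : 0 ≤ b := hb
  refine ⟨mul_le_mul hab h1 hA (le_trans ha hab),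
    mul_le_mul_of_nonneg_left h2 hb,
    mul_le_mul_of_nonneg_left h3 ha,
    mul_le_mul hab h4 hm hb, ?_⟩
  nlinarith [mul_nonneg (sub_nonneg.2 hab) (sub_nonneg.2 h3),
    mul_nonneg hb (by linarith : (0:ℝ) ≤ m + M - A - B)]

lemma prod_minmax {ι : Type*} [DecidableEq ι] (s : Finset ι) (a b c d : ι → ℝ)
    (ha : ∀ e ∈ s, 0 ≤ a e) (hb : ∀ e ∈ s, 0 ≤ b e)
    (hswap : ∀ e ∈ s, (c e = a e ∧ d e = b e) ∨ (c e = b e ∧ d e = a e))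
    (hcd : ∀ e ∈ s, c e ≤ d e) :
    (∏ e ∈ s, a e ≤ ∏ e ∈ s, d e) ∧ (∏ e ∈ s, b e ≤ ∏ e ∈ s, d e) ∧
    (∏ e ∈ s, c e ≤ ∏ e ∈ s, a e) ∧ (∏ e ∈ s, c e ≤ ∏ e ∈ s, b e) ∧
    (∏ e ∈ s, a e + ∏ e ∈ s, b e ≤ ∏ e ∈ s, c e + ∏ e ∈ s, d e) := by
  induction s using Finset.induction_on with
  | empty => simp
  | insert x t hx ih =>
    have ha' : ∀ e ∈ t, 0 ≤ a e := fun e he => ha e (mem_insert_of_mem he)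
    have hb' : ∀ e ∈ t, 0 ≤ b e := fun e he => hb e (mem_insert_of_mem he)
    obtain ⟨i1, i2, i3, i4, i5⟩ := ih ha' hb'
      (fun e he => hswap e (mem_insert_of_mem he)) (fun e he => hcd e (mem_insert_of_mem he))
    have hA : 0 ≤ ∏ e ∈ t, a e := Finset.prod_nonneg ha'
    have hB : 0 ≤ ∏ e ∈ t, b e := Finset.prod_nonneg hb'
    have hm : 0 ≤ ∏ e ∈ t, c e := by
      refine Finset.prod_nonneg fun e he => ?_
      rcases hswap e (mem_insert_of_mem he) with ⟨h1, _⟩ | ⟨h1, _⟩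
      · rw [h1]; exact ha' e he
      · rw [h1]; exact hb' e he
    rw [Finset.prod_insert hx, Finset.prod_insert hx, Finset.prod_insert hx,
      Finset.prod_insert hx]
    have hax : 0 ≤ a x := ha x (mem_insert_self _ _)
    have hbx : 0 ≤ b x := hb x (mem_insert_self _ _)
    rcases hswap x (mem_insert_self _ _) with ⟨hc, hd⟩ | ⟨hc, hd⟩
    · have hab : a x ≤ b x := by rw [← hc, ← hd]; exact hcd x (mem_insert_self _ _)
      obtain ⟨j1, j2, j3, j4, j5⟩ := key_step (a x) (b x) (∏ e ∈ t, a e) (∏ e ∈ t, b e)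
        (∏ e ∈ t, c e) (∏ e ∈ t, d e) hax hbx hab hA hB hm i1 i2 i3 i4 i5
      rw [hc, hd]
      exact ⟨j1, j2, j3, j4, by linarith⟩
    · have hab : b x ≤ a x := by rw [← hc, ← hd]; exact hcd x (mem_insert_self _ _)
      obtain ⟨j1, j2, j3, j4, j5⟩ := key_step (b x) (a x) (∏ e ∈ t, b e) (∏ e ∈ t, a e)
        (∏ e ∈ t, c e) (∏ e ∈ t, d e) hbx hax hab hB hA hm i2 i1 i4 i3 (by linarith)
      rw [hc, hd]
      exact ⟨j2, j1, j4, j3, by linarith⟩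

section submod
variable {E : Finset ε} {V : ε → Finset ℝ} {p : ε × ℝ → ℝ}
variable (hp : ∀ e ∈ E, ∀ v ∈ V e, 0 < p (e, v)) (hsum : ∀ e ∈ E, ∑ v ∈ V e, p (e, v) < 1)

include hp hsum in
lemma fPoI_submodular {F G : Finset (ε × ℝ)} (hF : inLattice E V F) (hG : inLattice E V G) :
    fPoI E V p (F ∪ G) + fPoI E V p (F ∩ G) ≤ fPoI E V p F + fPoI E V p G := by
  have key := prod_minmax E (fun e => 1 - xe V p F e) (fun e => 1 - xe V p G e)
    (fun e => 1 - xe V p (F ∪ G) e) (fun e => 1 - xe V p (F ∩ G) e)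
    (fun e he => le_of_lt (factor_pos hp hsum he))
    (fun e he => le_of_lt (factor_pos hp hsum he))
    (fun e he => ?_) (fun e he => ?_)
  · rw [fPoI_def, fPoI_def, fPoI_def, fPoI_def]
    have := key.2.2.2.2
    linarith
  · rcases slice_nested hF hG e with h | h
    · right
      constructor
      · simp only [sub_right_inj]
        rw [xe, xe, slice_union, Finset.union_eq_right.2 h]
      · simp only [sub_right_inj]
        rw [xe, xe, slice_inter, Finset.inter_eq_left.2 h]
    · left
      constructor
      · simp only [sub_right_inj]
        rw [xe, xe, slice_union, Finset.union_eq_left.2 h]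
      · simp only [sub_right_inj]
        rw [xe, xe, slice_inter, Finset.inter_eq_right.2 h]
  · have h1 : xe V p (F ∩ G) e ≤ xe V p (F ∪ G) e :=
      xe_mono hp (Finset.inter_subset_left.trans Finset.subset_union_left) he
    simp only [sub_le_sub_iff_left]
    exact h1

end submod

/-- tightness of a lattice set w.r.t. `y` -/
def Tight (E : Finset ε) (V : ε → Finset ℝ) (p : ε × ℝ → ℝ) (y : ε × ℝ → ℝ)
    (F : Finset (ε × ℝ)) : Prop :=
  inLattice E V F ∧ ∑ q ∈ F, y q = fPoI E V p F

/-- the ground set as a finset -/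
noncomputable def ground (E : Finset ε) (V : ε → Finset ℝ) : Finset (ε × ℝ) :=
  E.biUnion fun e => (V e).image fun v => (e, v)

lemma mem_ground_iff {E : Finset ε} {V : ε → Finset ℝ} {q : ε × ℝ} :
    q ∈ ground E V ↔ inGround E V q := by
  constructor
  · intro h
    rcases Finset.mem_biUnion.1 h with ⟨e, he, hq⟩
    rcases Finset.mem_image.1 hq with ⟨v, hv, rfl⟩
    exact ⟨he, hv⟩
  · rintro ⟨h1, h2⟩
    exact Finset.mem_biUnion.2 ⟨q.1, h1, Finset.mem_image.2 ⟨q.2, h2, rfl⟩⟩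

lemma lattice_subset_ground {E : Finset ε} {V : ε → Finset ℝ} {F : Finset (ε × ℝ)}
    (hF : inLattice E V F) : F ⊆ ground E V :=
  fun q hq => mem_ground_iff.2 (hF.1 q hq)

lemma lattice_union {E : Finset ε} {V : ε → Finset ℝ} {F G : Finset (ε × ℝ)}
    (hF : inLattice E V F) (hG : inLattice E V G) : inLattice E V (F ∪ G) := by
  constructor
  · intro q hq
    rcases Finset.mem_union.1 hq with h | h
    · exact hF.1 q h
    · exact hG.1 q h
  · intro e v v' hv hv' hle
    rcases Finset.mem_union.1 hv with h | h
    · exact Finset.mem_union.2 (Or.inl (hF.2 e v v' h hv' hle))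
    · exact Finset.mem_union.2 (Or.inr (hG.2 e v v' h hv' hle))

lemma lattice_inter {E : Finset ε} {V : ε → Finset ℝ} {F G : Finset (ε × ℝ)}
    (hF : inLattice E V F) (hG : inLattice E V G) : inLattice E V (F ∩ G) := by
  constructor
  · intro q hq
    exact hF.1 q (Finset.mem_inter.1 hq).1
  · intro e v v' hv hv' hle
    have h := Finset.mem_inter.1 hv
    exact Finset.mem_inter.2 ⟨hF.2 e v v' h.1 hv' hle, hG.2 e v v' h.2 hv' hle⟩

lemma lattice_empty (E : Finset ε) (V : ε → Finset ℝ) : inLattice E V (∅ : Finset (ε × ℝ)) := by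
  constructor
  · intro q hq; exact absurd hq (Finset.notMem_empty q)
  · intro e v v' hv; exact absurd hv (Finset.notMem_empty _)

lemma tight_empty (E : Finset ε) (V : ε → Finset ℝ) (p y : ε × ℝ → ℝ) :
    Tight E V p y (∅ : Finset (ε × ℝ)) := by
  refine ⟨lattice_empty E V, ?_⟩
  rw [Finset.sum_empty, fPoI_empty]

section withy
variable {E : Finset ε} {V : ε → Finset ℝ} {p : ε × ℝ → ℝ} {y : ε × ℝ → ℝ}
variable (hp : ∀ e ∈ E, ∀ v ∈ V e, 0 < p (e, v)) (hsum : ∀ e ∈ E, ∑ v ∈ V e, p (e, v) < 1)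

include hp hsum in
lemma tight_union_inter (hyP : y ∈ poiPolytope E V p) {F G : Finset (ε × ℝ)}
    (hF : Tight E V p y F) (hG : Tight E V p y G) :
    Tight E V p y (F ∪ G) ∧ Tight E V p y (F ∩ G) := by
  have hLu : inLattice E V (F ∪ G) := lattice_union hF.1 hG.1
  have hLi : inLattice E V (F ∩ G) := lattice_inter hF.1 hG.1
  have h1 : ∑ q ∈ F ∪ G, y q ≤ fPoI E V p (F ∪ G) := hyP.2.2 _ hLu
  have h2 : ∑ q ∈ F ∩ G, y q ≤ fPoI E V p (F ∩ G) := hyP.2.2 _ hLi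
  have h3 := fPoI_submodular hp hsum hF.1 hG.1
  have h4 : ∑ q ∈ F ∪ G, y q + ∑ q ∈ F ∩ G, y q = ∑ q ∈ F, y q + ∑ q ∈ G, y q :=
    Finset.sum_union_inter
  exact ⟨⟨hLu, by linarith [hF.2, hG.2]⟩, ⟨hLi, by linarith [hF.2, hG.2]⟩⟩

lemma perturb_zero (hy : y ∈ Set.extremePoints ℝ (poiPolytope E V p))
    {Y : Finset (ε × ℝ)} (hY : Y = (ground E V).filter fun q => 0 < y q)
    (z : ε × ℝ → ℝ) (hzY : ∀ q, z q ≠ 0 → q ∈ Y)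
    (hzT : ∀ F, Tight E V p y F → ∑ q ∈ F, z q = 0) : ∀ q, z q = 0 := by
  by_contra hc
  push_neg at hc
  obtain ⟨q₀, hq₀⟩ := hc
  classical
  have hyP : y ∈ poiPolytope E V p := hy.1
  set G := ground E V with hG
  set Z := ∑ q ∈ G, |z q| with hZdef
  have hZ0 : 0 ≤ Z := Finset.sum_nonneg fun q _ => abs_nonneg _
  have hYsub : Y ⊆ G := by rw [hY]; exact Finset.filter_subset _ _
  have hYpos : ∀ q ∈ Y, 0 < y q := by
    intro q hq; rw [hY] at hq; exact (Finset.mem_filter.1 hq).2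
  have hzG : ∀ q, q ∉ G → z q = 0 := by
    intro q hq; by_contra h; exact hq (hYsub (hzY q h))
  have habs : ∀ q ∈ G, |z q| ≤ Z :=
    fun q hq => Finset.single_le_sum (fun r _ => abs_nonneg (z r)) hq
  have habsF : ∀ F : Finset (ε × ℝ), F ⊆ G → |∑ q ∈ F, z q| ≤ Z := by
    intro F hF
    calc |∑ q ∈ F, z q| ≤ ∑ q ∈ F, |z q| := Finset.abs_sum_le_sum_abs _ _
      _ ≤ Z := Finset.sum_le_sum_of_subset_of_nonneg hF (fun q _ _ => abs_nonneg _)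
  set NT := G.powerset.filter
    (fun F => inLattice E V F ∧ ∑ q ∈ F, y q ≠ fPoI E V p F) with hNT
  set A := Y.image y ∪ NT.image (fun F => fPoI E V p F - ∑ q ∈ F, y q) with hA
  have hq₀Y : q₀ ∈ Y := hzY q₀ hq₀
  have hAne : A.Nonempty :=
    ⟨y q₀, Finset.mem_union.2 (Or.inl (Finset.mem_image_of_mem y hq₀Y))⟩
  set δ := A.min' hAne with hδ
  have hδpos : 0 < δ := by
    rw [hδ]
    refine (Finset.lt_min'_iff _ _).2 fun r hr => ?_
    rcases Finset.mem_union.1 hr with h | h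
    · rcases Finset.mem_image.1 h with ⟨q, hq, rfl⟩
      exact hYpos q hq
    · rcases Finset.mem_image.1 h with ⟨F, hF, rfl⟩
      have hF' := Finset.mem_filter.1 hF
      have hle := hyP.2.2 F hF'.2.1
      have hne := hF'.2.2
      cases lt_or_eq_of_le hle with
      | inl h => linarith
      | inr h => exact absurd h hne
  set ε := δ / (Z + 1) with hε
  have hεpos : 0 < ε := div_pos hδpos (by linarith)
  have hεZ : ε * Z ≤ δ := by
    have h1 : ε * (Z + 1) = δ := div_mul_cancel₀ _ (by linarith)
    nlinarith
  have hmem : ∀ t : ℝ, |t| ≤ ε → (fun q => y q + t * z q) ∈ poiPolytope E V p := by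
    intro t ht
    have htz : ∀ q ∈ G, |t * z q| ≤ δ := by
      intro q hq
      calc |t * z q| = |t| * |z q| := abs_mul _ _
        _ ≤ ε * Z := mul_le_mul ht (habs q hq) (abs_nonneg _) (le_of_lt hεpos)
        _ ≤ δ := hεZ
    refine ⟨?_, ?_, ?_⟩
    · intro q hq
      by_cases hz : z q = 0
      · simp only [hz, mul_zero, add_zero]
        exact hyP.1 q hq
      · have hqY := hzY q hz
        have h1 : δ ≤ y q :=
          Finset.min'_le _ _ (Finset.mem_union.2 (Or.inl (Finset.mem_image_of_mem y hqY)))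
        have h2 := (abs_le.1 (htz q (hYsub hqY))).1
        simp only []
        linarith
    · intro q hq
      have h1 : y q = 0 := hyP.2.1 q hq
      have h2 : z q = 0 := hzG q (fun h => hq (mem_ground_iff.1 h))
      simp [h1, h2]
    · intro F hF
      have hsplit : ∑ q ∈ F, (y q + t * z q) = ∑ q ∈ F, y q + t * ∑ q ∈ F, z q := by
        rw [Finset.sum_add_distrib, Finset.mul_sum]
      show ∑ q ∈ F, (y q + t * z q) ≤ fPoI E V p F
      rw [hsplit]
      by_cases hti : ∑ q ∈ F, y q = fPoI E V p F
      · have h0 : ∑ q ∈ F, z q = 0 := hzT F ⟨hF, hti⟩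
        rw [h0, mul_zero, add_zero, hti]
      · have hFNT : F ∈ NT := Finset.mem_filter.2
          ⟨Finset.mem_powerset.2 (lattice_subset_ground hF), hF, hti⟩
        have hslack : δ ≤ fPoI E V p F - ∑ q ∈ F, y q :=
          Finset.min'_le _ _ (Finset.mem_union.2 (Or.inr (Finset.mem_image_of_mem _ hFNT)))
        have hb : |t * ∑ q ∈ F, z q| ≤ δ := by
          calc |t * ∑ q ∈ F, z q| = |t| * |∑ q ∈ F, z q| := abs_mul _ _
            _ ≤ ε * Z := mul_le_mul ht (habsF F (lattice_subset_ground hF))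
                (abs_nonneg _) (le_of_lt hεpos)
            _ ≤ δ := hεZ
        have := (abs_le.1 hb).2
        linarith
  have h₁ := hmem ε (le_of_eq (abs_of_pos hεpos))
  have h₂ := hmem (-ε) (le_of_eq (by rw [abs_neg, abs_of_pos hεpos]))
  have hseg : y ∈ openSegment ℝ (fun q => y q + ε * z q) (fun q => y q + (-ε) * z q) := by
    refine ⟨1/2, 1/2, by norm_num, by norm_num, by norm_num, ?_⟩
    funext q
    simp only [Pi.add_apply, Pi.smul_apply, smul_eq_mul]
    ring
  have hfix := hy.2 h₁ h₂ hseg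
  have heq := congrFun hfix q₀
  have hz0 : ε * z q₀ = 0 := by linarith
  rcases mul_eq_zero.1 hz0 with h | h
  · exact absurd h (ne_of_gt hεpos)
  · exact hq₀ h

open Classical in
/-- the (finite) family of tight sets -/
noncomputable def tightFam (E : Finset ε) (V : ε → Finset ℝ) (p y : ε × ℝ → ℝ) :
    Finset (Finset (ε × ℝ)) :=
  (ground E V).powerset.filter (fun F => Tight E V p y F)

lemma mem_tightFam {F : Finset (ε × ℝ)} :
    F ∈ tightFam E V p y ↔ Tight E V p y F := by
  classical
  rw [tightFam]
  simp only [Finset.mem_filter, Finset.mem_powerset]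
  exact ⟨fun h => h.2, fun h => ⟨lattice_subset_ground h.1, h⟩⟩

include hp hsum in
lemma tight_sup (hyP : y ∈ poiPolytope E V p) (A : Finset (Finset (ε × ℝ)))
    (hA : ∀ F ∈ A, Tight E V p y F) : Tight E V p y (A.sup id) := by
  classical
  induction A using Finset.induction_on with
  | empty => simpa using tight_empty E V p y
  | insert F t hx ih =>
    rw [Finset.sup_insert]
    have h1 : Tight E V p y F := hA F (Finset.mem_insert_self _ _)
    have h2 : Tight E V p y (t.sup id) := ih (fun F hF => hA F (Finset.mem_insert_of_mem hF))
    exact (tight_union_inter hp hsum hyP h1 h2).1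

/-- the union of all tight sets -/
noncomputable def bigU (E : Finset ε) (V : ε → Finset ℝ) (p y : ε × ℝ → ℝ) :
    Finset (ε × ℝ) :=
  (tightFam E V p y).sup id

include hp hsum in
lemma tight_bigU (hyP : y ∈ poiPolytope E V p) : Tight E V p y (bigU E V p y) :=
  tight_sup hp hsum hyP _ (fun F hF => mem_tightFam.1 hF)

lemma tight_subset_bigU {F : Finset (ε × ℝ)} (hF : Tight E V p y F) :
    F ⊆ bigU E V p y := by
  have : F ∈ tightFam E V p y := mem_tightFam.2 hF
  exact Finset.le_sup (f := id) this

include hp hsum in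
lemma Y_subset_bigU (hy : y ∈ Set.extremePoints ℝ (poiPolytope E V p))
    {Y : Finset (ε × ℝ)} (hY : Y = (ground E V).filter fun q => 0 < y q) :
    Y ⊆ bigU E V p y := by
  classical
  intro q hq
  by_contra hqU
  set z : ε × ℝ → ℝ := fun r => if r = q then 1 else 0 with hz
  have h0 : ∀ r, z r = 0 := by
    refine perturb_zero hy hY z ?_ ?_
    · intro r hr
      rw [hz] at hr
      by_cases h : r = q
      · rw [h]; exact hq
      · simp [h] at hr
    · intro F hF
      have hqF : q ∉ F := fun hc => hqU (tight_subset_bigU hF hc)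
      rw [hz]
      rw [Finset.sum_ite_eq' F q (fun _ => (1:ℝ))]
      simp [hqF]
  have := h0 q
  simp [hz] at this

include hp hsum in
lemma jump_structure (hy : y ∈ Set.extremePoints ℝ (poiPolytope E V p))
    {Y : Finset (ε × ℝ)} (hY : Y = (ground E V).filter fun q => 0 < y q)
    {T T' : Finset (ε × ℝ)} (hT : Tight E V p y T) (hT' : Tight E V p y T')
    (hss : T ⊂ T')
    (hmin : ∀ R, Tight E V p y R → T ⊂ R → R ⊂ T' → False) :
    ∃ e v, (T' \ T) ∩ Y = {(e, v)} ∧ ∀ q ∈ T' \ T, q.1 = e ∧ v ≤ q.2 := by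
  classical
  have hyP : y ∈ poiPolytope E V p := hy.1
  -- (a) each jump element sits above a jump element of `Y` with the same edge
  have ha : ∀ q ∈ T' \ T, ∃ m, (q.1, m) ∈ (T' \ T) ∩ Y ∧ m ≤ q.2 := by
    intro q hq
    obtain ⟨hqT', hqT⟩ := Finset.mem_sdiff.1 hq
    have hqg : inGround E V q := hT'.1.1 q hqT'
    have hqT'' : (q.1, q.2) ∈ T' := by rw [Prod.mk.eta]; exact hqT'
    have hqslice : q.2 ∈ slice V T' q.1 := Finset.mem_filter.2 ⟨hqg.2, hqT''⟩
    set s := slice V T' q.1 with hs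
    have hsne : s.Nonempty := ⟨q.2, hqslice⟩
    set m := s.min' hsne with hm
    have hmmem : m ∈ s := s.min'_mem hsne
    have hmV : m ∈ V q.1 := (Finset.mem_filter.1 hmmem).1
    have hmT' : (q.1, m) ∈ T' := (Finset.mem_filter.1 hmmem).2
    have hmle : m ≤ q.2 := s.min'_le _ hqslice
    have hmT : (q.1, m) ∉ T := by
      intro hc
      have h2 : (q.1, q.2) ∈ T := hT.1.2 q.1 m q.2 hc hqg.2 hmle
      rw [Prod.mk.eta] at h2
      exact hqT h2
    set F := T'.erase (q.1, m) with hF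
    have hFlat : inLattice E V F := by
      constructor
      · intro r hr; exact hT'.1.1 r (Finset.erase_subset _ _ hr)
      · intro e v v' hv hv' hle
        have hvT' : (e, v) ∈ T' := Finset.erase_subset _ _ hv
        have hv'T' : (e, v') ∈ T' := hT'.1.2 e v v' hvT' hv' hle
        refine Finset.mem_erase.2 ⟨?_, hv'T'⟩
        intro hc
        rw [Prod.mk.injEq] at hc
        obtain ⟨he, hvm⟩ := hc
        subst he
        have hvV : v ∈ V q.1 := (hT'.1.1 _ hvT').2
        have hvs : v ∈ s := Finset.mem_filter.2 ⟨hvV, hvT'⟩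
        have h1 : m ≤ v := s.min'_le _ hvs
        have h2 : v = m := le_antisymm (hvm ▸ hle) h1
        exact (Finset.mem_erase.1 hv).1 (by rw [h2])
    have hFsub : F ⊆ T' := Finset.erase_subset _ _
    have hle := hyP.2.2 F hFlat
    have hstrict : fPoI E V p F < fPoI E V p T' :=
      fPoI_strict_mono hp hsum hFsub hmT' (Finset.notMem_erase _ _) hqg.1 hmV
    have hsumF : ∑ r ∈ F, y r = ∑ r ∈ T', y r - y (q.1, m) :=
      Finset.sum_erase_eq_sub hmT'
    have hypos : 0 < y (q.1, m) := by
      have h3 := hT'.2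
      rw [hsumF] at hle
      linarith
    exact ⟨m, Finset.mem_inter.2 ⟨Finset.mem_sdiff.2 ⟨hmT', hmT⟩,
      by rw [hY]; exact Finset.mem_filter.2 ⟨mem_ground_iff.2 ⟨hqg.1, hmV⟩, hypos⟩⟩, hmle⟩
  -- (b) the jump contains at most one element of Y
  have hb : ∀ q₁ ∈ (T' \ T) ∩ Y, ∀ q₂ ∈ (T' \ T) ∩ Y, q₁ = q₂ := by
    intro q₁ h₁ q₂ h₂
    by_contra hne
    have key : ∀ a b, a ∈ (T' \ T) ∩ Y → b ∈ (T' \ T) ∩ Y →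
        ∀ W, Tight E V p y W → a ∈ W → b ∈ W := by
      intro a b hain hbin W hW haW
      by_contra hbW
      set R := (T ∪ W) ∩ T' with hR
      have hRt : Tight E V p y R :=
        (tight_union_inter hp hsum hyP ((tight_union_inter hp hsum hyP hT hW).1) hT').2
      have hTR : T ⊆ R := fun r hr =>
        Finset.mem_inter.2 ⟨Finset.mem_union.2 (Or.inl hr), hss.1 hr⟩
      have haR : a ∈ R := Finset.mem_inter.2 ⟨Finset.mem_union.2 (Or.inr haW),
        (Finset.mem_sdiff.1 (Finset.mem_inter.1 hain).1).1⟩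
      have haT : a ∉ T := (Finset.mem_sdiff.1 (Finset.mem_inter.1 hain).1).2
      have hRT' : R ⊆ T' := Finset.inter_subset_right
      have hbR : b ∉ R := by
        intro hc
        rcases Finset.mem_union.1 (Finset.mem_inter.1 hc).1 with h | h
        · exact (Finset.mem_sdiff.1 (Finset.mem_inter.1 hbin).1).2 h
        · exact hbW h
      have hbT' : b ∈ T' := (Finset.mem_sdiff.1 (Finset.mem_inter.1 hbin).1).1
      exact hmin R hRt ⟨hTR, fun hc => haT (hc haR)⟩ ⟨hRT', fun hc => hbR (hc hbT')⟩
    have hsep : ∀ W, Tight E V p y W → (q₁ ∈ W ↔ q₂ ∈ W) := fun W hW =>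
      ⟨fun h => key q₁ q₂ h₁ h₂ W hW h, fun h => key q₂ q₁ h₂ h₁ W hW h⟩
    set z : ε × ℝ → ℝ := fun r => (if r = q₁ then 1 else 0) - (if r = q₂ then 1 else 0) with hz
    have h0 : ∀ r, z r = 0 := by
      refine perturb_zero hy hY z ?_ ?_
      · intro r hr
        rw [hz] at hr
        by_cases e1 : r = q₁
        · subst e1; exact (Finset.mem_inter.1 h₁).2
        · by_cases e2 : r = q₂
          · subst e2; exact (Finset.mem_inter.1 h₂).2
          · simp [e1, e2] at hr
      · intro W hW
        rw [hz]
        rw [Finset.sum_sub_distrib, Finset.sum_ite_eq' W q₁ (fun _ => (1:ℝ)),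
          Finset.sum_ite_eq' W q₂ (fun _ => (1:ℝ))]
        by_cases h : q₁ ∈ W
        · simp [h, (hsep W hW).1 h]
        · have h2 : q₂ ∉ W := fun hc => h ((hsep W hW).2 hc)
          simp [h, h2]
    have h1 := h0 q₁
    rw [hz] at h1
    norm_num [hne] at h1
  obtain ⟨q₀, hq₀T', hq₀T⟩ := Finset.exists_of_ssubset hss
  have hq₀J : q₀ ∈ T' \ T := Finset.mem_sdiff.2 ⟨hq₀T', hq₀T⟩
  obtain ⟨v₀, hv₀, _⟩ := ha q₀ hq₀J
  refine ⟨q₀.1, v₀, ?_, ?_⟩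
  · exact Finset.eq_singleton_iff_unique_mem.2 ⟨hv₀, fun x hx => hb x hx _ hv₀⟩
  · intro q hq
    obtain ⟨m, hm, hmle⟩ := ha q hq
    have heq : ((q.1, m) : ε × ℝ) = (q₀.1, v₀) := hb _ hm _ hv₀
    rw [Prod.mk.injEq] at heq
    refine ⟨heq.1, ?_⟩
    rw [← heq.2]
    exact hmle

include hp hsum in
lemma chain_exists (hy : y ∈ Set.extremePoints ℝ (poiPolytope E V p))
    {Y : Finset (ε × ℝ)} (hY : Y = (ground E V).filter fun q => 0 < y q) :
    ∀ (j : ℕ) (T : Finset (ε × ℝ)), Tight E V p y T → (Y \ T).card = j →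
    ∃ S : Fin (j + 1) → Finset (ε × ℝ),
      S 0 = T ∧ (∀ i, Tight E V p y (S i)) ∧
      (∀ i : Fin j, S i.castSucc ⊂ S i.succ) ∧
      (∀ i : Fin j, ∃ e v, (S i.succ \ S i.castSucc) ∩ Y = {(e, v)} ∧
        ∀ q ∈ S i.succ \ S i.castSucc, q.1 = e ∧ v ≤ q.2) := by
  intro j
  induction j with
  | zero =>
    intro T hT _
    exact ⟨fun _ => T, rfl, fun _ => hT, fun i => i.elim0, fun i => i.elim0⟩
  | succ j ih =>
    intro T hT hcard
    classical
    have hne : (Y \ T).Nonempty := Finset.card_pos.1 (by rw [hcard]; exact Nat.succ_pos j)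
    obtain ⟨q, hq⟩ := hne
    have hqY : q ∈ Y := (Finset.mem_sdiff.1 hq).1
    have hqT : q ∉ T := (Finset.mem_sdiff.1 hq).2
    have hqU : q ∈ bigU E V p y := Y_subset_bigU hp hsum hy hY hqY
    set C := (tightFam E V p y).filter (fun R => T ⊂ R) with hC
    have hCne : C.Nonempty := by
      refine ⟨bigU E V p y, Finset.mem_filter.2 ⟨mem_tightFam.2 (tight_bigU hp hsum hy.1), ?_⟩⟩
      exact ⟨tight_subset_bigU hT, fun hc => hqT (hc hqU)⟩
    obtain ⟨T', hT'C, hT'min⟩ := Finset.exists_min_image C (fun R => R.card) hCne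
    have hT't : Tight E V p y T' := mem_tightFam.1 (Finset.mem_filter.1 hT'C).1
    have hTT' : T ⊂ T' := (Finset.mem_filter.1 hT'C).2
    have hmin : ∀ R, Tight E V p y R → T ⊂ R → R ⊂ T' → False := by
      intro R hR h1 h2
      have hRC : R ∈ C := Finset.mem_filter.2 ⟨mem_tightFam.2 hR, h1⟩
      have hc1 := hT'min R hRC
      have hc2 := Finset.card_lt_card h2
      omega
    obtain ⟨e₀, v₀, hsing, hjump⟩ := jump_structure hp hsum hy hY hT hT't hTT' hmin
    have hev : ((e₀, v₀) : ε × ℝ) ∈ (T' \ T) ∩ Y := by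
      rw [hsing]; exact Finset.mem_singleton_self _
    have hevT' : ((e₀, v₀) : ε × ℝ) ∈ T' := (Finset.mem_sdiff.1 (Finset.mem_inter.1 hev).1).1
    have hevT : ((e₀, v₀) : ε × ℝ) ∉ T := (Finset.mem_sdiff.1 (Finset.mem_inter.1 hev).1).2
    have hevY : ((e₀, v₀) : ε × ℝ) ∈ Y := (Finset.mem_inter.1 hev).2
    have hYT : Y \ T = insert ((e₀, v₀) : ε × ℝ) (Y \ T') := by
      ext r
      simp only [Finset.mem_insert, Finset.mem_sdiff]
      constructor
      · rintro ⟨hrY, hrT⟩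
        by_cases hrT' : r ∈ T'
        · left
          have hmem : r ∈ (T' \ T) ∩ Y :=
            Finset.mem_inter.2 ⟨Finset.mem_sdiff.2 ⟨hrT', hrT⟩, hrY⟩
          rw [hsing] at hmem
          exact Finset.mem_singleton.1 hmem
        · right; exact ⟨hrY, hrT'⟩
      · rintro (rfl | ⟨hrY, hrT'⟩)
        · exact ⟨hevY, hevT⟩
        · exact ⟨hrY, fun hc => hrT' (hTT'.1 hc)⟩
    have hnotin : ((e₀, v₀) : ε × ℝ) ∉ Y \ T' := fun hc => (Finset.mem_sdiff.1 hc).2 hevT'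
    have hcard' : (Y \ T').card = j := by
      have hci := Finset.card_insert_of_notMem hnotin
      rw [← hYT, hcard] at hci
      omega
    obtain ⟨S', hS0, hStight, hSss, hSstruct⟩ := ih T' hT't hcard'
    refine ⟨Fin.cases T S', by simp, ?_, ?_, ?_⟩
    · intro i
      induction i using Fin.cases with
      | zero => simpa using hT
      | succ i => simpa only [Fin.cases_succ] using hStight i
    · intro i
      induction i using Fin.cases with
      | zero =>
        simp only [Fin.castSucc_zero, Fin.cases_zero, Fin.succ_zero_eq_one]
        have h1 : (1 : Fin (j + 2)) = Fin.succ 0 := rfl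
        rw [h1, Fin.cases_succ, hS0]
        exact hTT'
      | succ i =>
        simp only [Fin.castSucc_succ, Fin.cases_succ]
        simpa only [Fin.cases_succ] using hSss i
    · intro i
      induction i using Fin.cases with
      | zero =>
        simp only [Fin.castSucc_zero, Fin.cases_zero, Fin.succ_zero_eq_one]
        have h1 : (1 : Fin (j + 2)) = Fin.succ 0 := rfl
        rw [h1, Fin.cases_succ, hS0]
        exact ⟨e₀, v₀, hsing, hjump⟩
      | succ i =>
        simp only [Fin.castSucc_succ, Fin.cases_succ]
        simpa only [Fin.cases_succ] using hSstruct i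

end withy
end PoI

/-- **Structure of extreme points (Lemma 3.7)**: for an extreme point `y` of the
polytope, with `Y = {(e,v) ∈ E_all : y (e,v) > 0}` and `k = |Y|`, there is a chain
`∅ = S₀ ⊊ S₁ ⊊ ⋯ ⊊ S_k` of sets of the lattice family `L` such that each `Sᵢ`
(for `i ≥ 1`) is tight, `(Sᵢ \ Sᵢ₋₁) ∩ Y` is a singleton `{(eᵢ, vᵢ)}`, and every
pair `(e, w) ∈ Sᵢ \ Sᵢ₋₁` has `e = eᵢ` and `w ≥ vᵢ`. -/
theorem extreme_point_chain_lattice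
    {ε : Type*} [DecidableEq ε] (E : Finset ε) (V : ε → Finset ℝ)
    (hV : ∀ e ∈ E, (V e).Nonempty)
    (p : ε × ℝ → ℝ)
    (hp : ∀ e ∈ E, ∀ v ∈ V e, 0 < p (e, v))
    (hsum : ∀ e ∈ E, ∑ v ∈ V e, p (e, v) < 1)
    (y : ε × ℝ → ℝ) (hy : y ∈ Set.extremePoints ℝ (poiPolytope E V p))
    (Y : Finset (ε × ℝ))
    (hY : Y = (E.biUnion fun e => (V e).image fun v => (e, v)).filter fun q => 0 < y q)
    (k : ℕ) (hk : k = Y.card) :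
    ∃ S : Fin (k + 1) → Finset (ε × ℝ),
      S 0 = ∅ ∧
      (∀ i, inLattice E V (S i)) ∧
      (∀ i : Fin k, S i.castSucc ⊂ S i.succ) ∧
      (∀ i : Fin k, ∑ q ∈ S i.succ, y q = fPoI E V p (S i.succ)) ∧
      (∀ i : Fin k, ∃ e v,
        (S i.succ \ S i.castSucc) ∩ Y = {(e, v)} ∧
        ∀ q ∈ S i.succ \ S i.castSucc, q.1 = e ∧ v ≤ q.2) := by
  classical
  have hY' : Y = (PoI.ground E V).filter fun q => 0 < y q := hY
  obtain ⟨S, hS0, hTight, hss, hstruct⟩ :=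
    PoI.chain_exists hp hsum hy hY' k ∅ (PoI.tight_empty E V p y)
      (by rw [Finset.sdiff_empty, hk])
  exact ⟨S, hS0, fun i => (hTight i).1, hss, fun i => (hTight i.succ).2, hstruct⟩
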